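/- arXiv:1710.10864 — 2 statements merged into one kernel-verified Lean document; each statement's English description precedes it below -/
import Mathlib

section
/- For any positive semidefinite symmetric real matrices P and Q of size r, and any nonnegative integers m and n, one has 0 ≤ Tr((PQ)^{n+m}) ≤ Tr((PQ)^m) · Tr((PQ)^n). -/
open Matrix

private lemma trace_pow_eq_sum_eigenvalues {r : ℕ} (M : Matrix (Fin r) (Fin r) ℝ)
    (hM : M.IsHermitian) (k : ℕ) :
    (M ^ k).trace = ∑ i, hM.eigenvalues i ^ k := by
  set V : Matrix (Fin r) (Fin r) ℝ := (hM.eigenvectorUnitary : Matrix (Fin r) (Fin r) ℝ) with hV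
  have hVV : V * star V = 1 := Matrix.mem_unitaryGroup_iff.mp hM.eigenvectorUnitary.2
  have hVV' : star V * V = 1 := Matrix.mem_unitaryGroup_iff'.mp hM.eigenvectorUnitary.2
  set D : Matrix (Fin r) (Fin r) ℝ := diagonal (RCLike.ofReal ∘ hM.eigenvalues) with hD
  have key : ∀ j : ℕ, M ^ j = V * D ^ j * star V := by
    intro j
    induction j with
    | zero => simp [hVV]
    | succ j ih =>
      have hMeq : M = V * D * star V := by rw [hV, hD]; exact hM.spectral_theorem
      rw [pow_succ, ih, pow_succ, hMeq]
      calc V * D ^ j * star V * (V * D * star V)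
          = V * D ^ j * (star V * V) * D * star V := by
            simp only [Matrix.mul_assoc]
        _ = V * (D ^ j * D) * star V := by rw [hVV']; simp only [Matrix.mul_one, Matrix.mul_assoc]
  rw [key k, Matrix.trace_mul_cycle, hVV', Matrix.one_mul, hD, diagonal_pow, trace_diagonal]
  simp

private lemma sum_pow_le {ι : Type*} [Fintype ι] (f : ι → ℝ) (hf : ∀ i, 0 ≤ f i) (m n : ℕ) :
    ∑ i, f i ^ (n + m) ≤ (∑ i, f i ^ m) * ∑ i, f i ^ n := by
  calc ∑ i, f i ^ (n + m) = ∑ i, f i ^ m * f i ^ n := by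
        simp [pow_add, mul_comm]
    _ ≤ ∑ i, (∑ j, f j ^ m) * f i ^ n := by
        refine Finset.sum_le_sum fun i _ => ?_
        refine mul_le_mul_of_nonneg_right ?_ (pow_nonneg (hf i) n)
        exact Finset.single_le_sum (fun j _ => pow_nonneg (hf j) m) (Finset.mem_univ i)
    _ = (∑ i, f i ^ m) * ∑ i, f i ^ n := by rw [← Finset.mul_sum]

theorem wishart_trace_product_bound {r : ℕ} (P Q : Matrix (Fin r) (Fin r) ℝ)
    (hP : P.PosSemidef) (hQ : Q.PosSemidef) (m n : ℕ) :
    0 ≤ ((P * Q) ^ (n + m)).trace ∧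
      ((P * Q) ^ (n + m)).trace ≤ ((P * Q) ^ m).trace * ((P * Q) ^ n).trace := by
  open scoped MatrixOrder in
  set S := CFC.sqrt Q with hS
  open scoped MatrixOrder in
  have hSherm : S.IsHermitian := (Matrix.nonneg_iff_posSemidef.mp (CFC.sqrt_nonneg Q)).isHermitian
  open scoped MatrixOrder in
  have hSS : S * S = Q := CFC.sqrt_mul_sqrt_self Q hQ.nonneg
  set M := S * P * S with hM
  have hMpsd : M.PosSemidef := by
    have := hP.mul_mul_conjTranspose_same S
    rwa [hSherm.eq] at this
  -- trace of (P*Q)^k equals trace of M^k for all k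
  have htr : ∀ k : ℕ, ((P * Q) ^ k).trace = (M ^ k).trace := by
    have key : ∀ k : ℕ, M ^ (k + 1) = S * ((P * Q) ^ k * P) * S := by
      intro k
      induction k with
      | zero => simp [hM]
      | succ k ih =>
        rw [pow_succ, ih, hM]
        calc S * ((P * Q) ^ k * P) * S * (S * P * S)
            = S * ((P * Q) ^ k * P * (S * S) * P) * S := by
              simp only [Matrix.mul_assoc]
          _ = S * ((P * Q) ^ (k + 1) * P) * S := by
              rw [hSS, pow_succ]; simp only [Matrix.mul_assoc]
    intro k
    cases k with
    | zero => simp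
    | succ k =>
      rw [key k, Matrix.trace_mul_cycle, ← Matrix.mul_assoc, hSS,
        Matrix.trace_mul_cycle Q, ← pow_succ']
  have heig : ∀ k : ℕ, ((P * Q) ^ k).trace = ∑ i, hMpsd.isHermitian.eigenvalues i ^ k := by
    intro k
    rw [htr k, trace_pow_eq_sum_eigenvalues M hMpsd.isHermitian k]
  have hnn : ∀ i, 0 ≤ hMpsd.isHermitian.eigenvalues i := hMpsd.eigenvalues_nonneg
  constructor
  · rw [heig]
    exact Finset.sum_nonneg fun i _ => pow_nonneg (hnn i) _
  · rw [heig, heig, heig]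
    exact sum_pow_le _ hnn m n
end

section
/- Let X₁, X₂ be independent centered Gaussian vectors in ℝ^r with common covariance P, and set 𝕏ᵢ = XᵢXᵢ'. Then E((𝕏₁−P)(𝕏₂−P)(𝕏₁−P)(𝕏₂−P)) = 3P⁴ + Tr(P²)·P². -/
open MeasureTheory ProbabilityTheory Matrix Real Filter
open scoped NNReal ENNReal

section GaussMoments

lemma cpm_integrable_pow_mul_exp {b : ℝ} (hb : 0 < b) (n : ℕ) :
    MeasureTheory.Integrable (fun x : ℝ => x ^ n * Real.exp (-b * x ^ 2)) := by
  have h := integrable_rpow_mul_exp_neg_mul_sq hb (s := (n : ℝ))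
    (by exact lt_of_lt_of_le neg_one_lt_zero (Nat.cast_nonneg n))
  simpa [Real.rpow_natCast] using h

lemma cpm_tendsto_atTop {b : ℝ} (hb : 0 < b) (n : ℕ) :
    Tendsto (fun x : ℝ => x ^ n * Real.exp (-b * x ^ 2)) atTop (nhds 0) := by
  have hhalf : Tendsto (fun x : ℝ => Real.exp (-(1/2) * x)) atTop (nhds 0) := by
    have h1 : Tendsto (fun x : ℝ => (1/2 : ℝ) * x) atTop atTop :=
      Tendsto.const_mul_atTop (by norm_num) tendsto_id
    have h2 : Tendsto (fun x : ℝ => -((1/2 : ℝ) * x)) atTop atBot :=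
      tendsto_neg_atTop_atBot.comp h1
    have h3 := Real.tendsto_exp_atBot.comp h2
    exact h3.congr fun x => by simp [Function.comp, neg_mul]
  have h := (rpow_mul_exp_neg_mul_sq_isLittleO_exp_neg hb (n : ℝ)).isBigO.trans_tendsto hhalf
  simpa [Real.rpow_natCast] using h

lemma cpm_tendsto_atBot {b : ℝ} (hb : 0 < b) (n : ℕ) :
    Tendsto (fun x : ℝ => x ^ n * Real.exp (-b * x ^ 2)) atBot (nhds 0) := by
  have h := ((cpm_tendsto_atTop hb n).comp tendsto_neg_atBot_atTop).const_mul ((-1 : ℝ) ^ n)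
  rw [mul_zero] at h
  refine h.congr fun x => ?_
  simp only [Function.comp_apply]
  have hx : (-x) ^ n * Real.exp (-b * (-x) ^ 2) = (-1:ℝ)^n * (x^n * Real.exp (-b * x^2)) := by
    rw [neg_pow, neg_sq]; ring
  rw [hx, ← mul_assoc, ← mul_pow]
  norm_num

lemma cpm_rec {b : ℝ} (hb : 0 < b) (n : ℕ) :
    ∫ x : ℝ, x ^ (n + 2) * Real.exp (-b * x ^ 2) =
      ((n + 1 : ℝ) / (2 * b)) * ∫ x : ℝ, x ^ n * Real.exp (-b * x ^ 2) := by
  set F : ℝ → ℝ := fun x => -(1 / (2 * b)) * (x ^ (n + 1) * Real.exp (-b * x ^ 2)) with hF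
  have hder : ∀ x : ℝ, HasDerivAt F
      (x ^ (n + 2) * Real.exp (-b * x ^ 2)
        - ((n + 1 : ℝ) / (2 * b)) * (x ^ n * Real.exp (-b * x ^ 2))) x := by
    intro x
    have h1 : HasDerivAt (fun x : ℝ => x ^ (n + 1)) ((n + 1 : ℝ) * x ^ n) x := by
      simpa using hasDerivAt_pow (n + 1) x
    have h0 : HasDerivAt (fun x : ℝ => -b * x ^ 2) (-b * (2 * x)) x := by
      simpa using (hasDerivAt_pow 2 x).const_mul (-b)
    have h2 : HasDerivAt (fun x : ℝ => Real.exp (-b * x ^ 2))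
        (Real.exp (-b * x ^ 2) * (-b * (2 * x))) x := (Real.hasDerivAt_exp _).comp x h0
    have h3 := (h1.mul h2).const_mul (-(1 / (2 * b)))
    refine h3.congr_deriv ?_
    field_simp [hb.ne']
    ring
  have hint : MeasureTheory.Integrable (fun x : ℝ =>
      x ^ (n + 2) * Real.exp (-b * x ^ 2)
        - ((n + 1 : ℝ) / (2 * b)) * (x ^ n * Real.exp (-b * x ^ 2))) :=
    (cpm_integrable_pow_mul_exp hb (n + 2)).sub ((cpm_integrable_pow_mul_exp hb n).const_mul _)
  have htop : Tendsto F atTop (nhds 0) := by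
    have h := (cpm_tendsto_atTop hb (n + 1)).const_mul (-(1 / (2 * b)))
    rw [mul_zero] at h
    exact h.congr fun x => rfl
  have hbot : Tendsto F atBot (nhds 0) := by
    have h := (cpm_tendsto_atBot hb (n + 1)).const_mul (-(1 / (2 * b)))
    rw [mul_zero] at h
    exact h.congr fun x => rfl
  have h0 := MeasureTheory.integral_of_hasDerivAt_of_tendsto hder hint hbot htop
  rw [sub_zero] at h0
  have hsplit := MeasureTheory.integral_sub (cpm_integrable_pow_mul_exp hb (n + 2))
    ((cpm_integrable_pow_mul_exp hb n).const_mul ((n + 1 : ℝ) / (2 * b)))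
  rw [hsplit] at h0
  have := sub_eq_zero.mp h0
  rw [this, MeasureTheory.integral_const_mul]

lemma cpm_I2 {b : ℝ} (hb : 0 < b) :
    ∫ x : ℝ, x ^ 2 * Real.exp (-b * x ^ 2) = (1 / (2 * b)) * Real.sqrt (π / b) := by
  have h := cpm_rec hb 0
  simp only [pow_zero, one_mul] at h
  rw [h, integral_gaussian]
  norm_num

lemma cpm_I4 {b : ℝ} (hb : 0 < b) :
    ∫ x : ℝ, x ^ 4 * Real.exp (-b * x ^ 2) = (3 / (2 * b)) * ((1 / (2 * b)) * Real.sqrt (π / b)) := by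
  have h := cpm_rec hb 2
  rw [cpm_I2 hb] at h
  rw [h]
  norm_num

end GaussMoments

section GaussianRealMoments

lemma cpm_pdf_toReal (v : ℝ≥0) (hv : v ≠ 0) (x : ℝ) :
    (ProbabilityTheory.gaussianPDF 0 v x).toReal
      = (Real.sqrt (2 * π * v))⁻¹ * Real.exp (-(2 * (v : ℝ))⁻¹ * x ^ 2) := by
  have hvpos : (0 : ℝ) < v := by
    have : v ≠ 0 := hv
    positivity
  rw [ProbabilityTheory.gaussianPDF, ENNReal.toReal_ofReal
    (ProbabilityTheory.gaussianPDFReal_nonneg _ _ _), ProbabilityTheory.gaussianPDFReal]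
  congr 2
  field_simp
  simp

lemma cpm_gaussianReal_integrable_pow (v : ℝ≥0) (n : ℕ) :
    MeasureTheory.Integrable (fun x : ℝ => x ^ n) (ProbabilityTheory.gaussianReal 0 v) := by
  by_cases hv : v = 0
  · subst hv
    rw [ProbabilityTheory.gaussianReal_zero_var]
    refine ⟨(measurable_id.pow_const n).aestronglyMeasurable, ?_⟩
    rw [MeasureTheory.HasFiniteIntegral]
    have hm : Measurable fun a : ℝ => ‖a ^ n‖ₑ :=
      (measurable_id.pow_const n).enorm
    rw [MeasureTheory.lintegral_dirac' _ hm]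
    exact enorm_lt_top
  · have hvpos : (0 : ℝ) < v := by positivity
    have hb : (0 : ℝ) < (2 * (v : ℝ))⁻¹ := by positivity
    rw [ProbabilityTheory.gaussianReal_of_var_ne_zero 0 hv,
      MeasureTheory.integrable_withDensity_iff (ProbabilityTheory.measurable_gaussianPDF 0 v)
        (MeasureTheory.ae_of_all _ fun x => ENNReal.ofReal_lt_top)]
    have h := ((cpm_integrable_pow_mul_exp hb n).const_mul ((Real.sqrt (2 * π * v))⁻¹))
    refine h.congr (MeasureTheory.ae_of_all _ fun x => ?_)
    dsimp only
    rw [cpm_pdf_toReal v hv x]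
    ring

lemma cpm_gaussianReal_integral_pow (v : ℝ≥0) (hv : v ≠ 0) (n : ℕ) :
    ∫ x : ℝ, x ^ n ∂(ProbabilityTheory.gaussianReal 0 v)
      = (Real.sqrt (2 * π * v))⁻¹ * ∫ x : ℝ, x ^ n * Real.exp (-(2 * (v : ℝ))⁻¹ * x ^ 2) := by
  rw [ProbabilityTheory.gaussianReal_of_var_ne_zero 0 hv]
  have hpdf : (ProbabilityTheory.gaussianPDF 0 v)
      = fun x => ((ProbabilityTheory.gaussianPDFReal 0 v x).toNNReal : ℝ≥0∞) := rfl
  rw [hpdf, integral_withDensity_eq_integral_smul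
    (by exact (ProbabilityTheory.measurable_gaussianPDFReal 0 v).real_toNNReal) (fun x => x ^ n)]
  rw [← MeasureTheory.integral_const_mul]
  apply MeasureTheory.integral_congr_ae
  refine MeasureTheory.ae_of_all _ fun x => ?_
  have h1 : ((ProbabilityTheory.gaussianPDFReal 0 v x).toNNReal : ℝ)
      = (ProbabilityTheory.gaussianPDF 0 v x).toReal := rfl
  dsimp only
  rw [NNReal.smul_def, smul_eq_mul, h1, cpm_pdf_toReal v hv x]
  ring

lemma cpm_sqrt_ne (v : ℝ≥0) (hv : v ≠ 0) : Real.sqrt (2 * π * v) ≠ 0 := by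
  have hvpos : (0 : ℝ) < v := by positivity
  have : (0 : ℝ) < 2 * π * v := by positivity
  exact ne_of_gt (Real.sqrt_pos.mpr this)

lemma cpm_pi_div (v : ℝ≥0) (hv : v ≠ 0) : π / (2 * (v : ℝ))⁻¹ = 2 * π * v := by
  have hvpos : (0 : ℝ) < v := by positivity
  field_simp

lemma cpm_gaussian_sq (v : ℝ≥0) :
    ∫ x : ℝ, x ^ 2 ∂(ProbabilityTheory.gaussianReal 0 v) = (v : ℝ) := by
  by_cases hv : v = 0
  · subst hv
    rw [ProbabilityTheory.gaussianReal_zero_var, MeasureTheory.integral_dirac]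
    norm_num
  · have hvpos : (0 : ℝ) < v := by positivity
    have hb : (0 : ℝ) < (2 * (v : ℝ))⁻¹ := by positivity
    rw [cpm_gaussianReal_integral_pow v hv 2, cpm_I2 hb, cpm_pi_div v hv]
    have h1 : 1 / (2 * (2 * (v : ℝ))⁻¹) = (v : ℝ) := by field_simp
    rw [h1]
    field_simp [cpm_sqrt_ne v hv]

lemma cpm_gaussian_pow4 (v : ℝ≥0) :
    ∫ x : ℝ, x ^ 4 ∂(ProbabilityTheory.gaussianReal 0 v) = 3 * (v : ℝ) ^ 2 := by
  by_cases hv : v = 0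
  · subst hv
    rw [ProbabilityTheory.gaussianReal_zero_var, MeasureTheory.integral_dirac]
    norm_num
  · have hvpos : (0 : ℝ) < v := by positivity
    have hb : (0 : ℝ) < (2 * (v : ℝ))⁻¹ := by positivity
    rw [cpm_gaussianReal_integral_pow v hv 4, cpm_I4 hb, cpm_pi_div v hv]
    have h1 : 1 / (2 * (2 * (v : ℝ))⁻¹) = (v : ℝ) := by field_simp
    have h2 : 3 / (2 * (2 * (v : ℝ))⁻¹) = 3 * (v : ℝ) := by field_simp
    rw [h1, h2]
    field_simp [cpm_sqrt_ne v hv]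

end GaussianRealMoments

section VectorMoments

variable {r : ℕ} {Ω : Type*} [MeasurableSpace Ω]

noncomputable def cpmQ (P : Matrix (Fin r) (Fin r) ℝ) (u w : Fin r → ℝ) : ℝ :=
  ∑ i, ∑ j, u i * P i j * w j

def cpmS (X : Ω → (Fin r → ℝ)) (u : Fin r → ℝ) (ω : Ω) : ℝ := ∑ i, u i * X ω i

lemma cpmPsym {P : Matrix (Fin r) (Fin r) ℝ} (hP : P.PosSemidef) (a b : Fin r) :
    P a b = P b a := by
  simpa using hP.1.apply b a

lemma cpmQ_nonneg {P : Matrix (Fin r) (Fin r) ℝ} (hP : P.PosSemidef) (u : Fin r → ℝ) :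
    0 ≤ cpmQ P u u := by
  have h := hP.dotProduct_mulVec_nonneg u
  have h2 : dotProduct (star u) (P *ᵥ u) = cpmQ P u u := by
    simp only [star_trivial, dotProduct, Matrix.mulVec, cpmQ, Finset.mul_sum]
    exact Finset.sum_congr rfl fun i _ => Finset.sum_congr rfl fun j _ => by ring
  rw [h2] at h
  exact h

variable {P : Matrix (Fin r) (Fin r) ℝ}

lemma cpmQ_add_left (u v w : Fin r → ℝ) : cpmQ P (u + v) w = cpmQ P u w + cpmQ P v w := by
  simp [cpmQ, add_mul, Finset.sum_add_distrib]

lemma cpmQ_sub_left (u v w : Fin r → ℝ) : cpmQ P (u - v) w = cpmQ P u w - cpmQ P v w := by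
  simp [cpmQ, sub_mul, Finset.sum_sub_distrib]

lemma cpmQ_add_right (u w z : Fin r → ℝ) : cpmQ P u (w + z) = cpmQ P u w + cpmQ P u z := by
  simp [cpmQ, mul_add, Finset.sum_add_distrib]

lemma cpmQ_sub_right (u w z : Fin r → ℝ) : cpmQ P u (w - z) = cpmQ P u w - cpmQ P u z := by
  simp [cpmQ, mul_sub, Finset.sum_sub_distrib]

lemma cpmQ_symm (hP : P.PosSemidef) (u w : Fin r → ℝ) : cpmQ P u w = cpmQ P w u := by
  rw [cpmQ, Finset.sum_comm, cpmQ]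
  exact Finset.sum_congr rfl fun a _ => Finset.sum_congr rfl fun b _ => by
    rw [cpmPsym hP b a]; ring

lemma cpmQ_expand_add (hP : P.PosSemidef) (u w : Fin r → ℝ) :
    cpmQ P (u + w) (u + w) = cpmQ P u u + 2 * cpmQ P u w + cpmQ P w w := by
  rw [cpmQ_add_left, cpmQ_add_right, cpmQ_add_right, cpmQ_symm hP w u]; ring

lemma cpmQ_expand_sub (hP : P.PosSemidef) (u w : Fin r → ℝ) :
    cpmQ P (u - w) (u - w) = cpmQ P u u - 2 * cpmQ P u w + cpmQ P w w := by
  rw [cpmQ_sub_left, cpmQ_sub_right, cpmQ_sub_right, cpmQ_symm hP w u]; ring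

lemma cpmQ_mix_pp (u v w z : Fin r → ℝ) :
    cpmQ P (u + v) (w + z) = cpmQ P u w + cpmQ P u z + cpmQ P v w + cpmQ P v z := by
  rw [cpmQ_add_left, cpmQ_add_right, cpmQ_add_right]; ring

lemma cpmQ_mix_pm (u v w z : Fin r → ℝ) :
    cpmQ P (u + v) (w - z) = cpmQ P u w - cpmQ P u z + cpmQ P v w - cpmQ P v z := by
  rw [cpmQ_add_left, cpmQ_sub_right, cpmQ_sub_right]; ring

lemma cpmQ_mix_mp (u v w z : Fin r → ℝ) :
    cpmQ P (u - v) (w + z) = cpmQ P u w + cpmQ P u z - cpmQ P v w - cpmQ P v z := by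
  rw [cpmQ_sub_left, cpmQ_add_right, cpmQ_add_right]; ring

lemma cpmQ_mix_mm (u v w z : Fin r → ℝ) :
    cpmQ P (u - v) (w - z) = cpmQ P u w - cpmQ P u z - cpmQ P v w + cpmQ P v z := by
  rw [cpmQ_sub_left, cpmQ_sub_right, cpmQ_sub_right]; ring

lemma cpmS_add (X : Ω → (Fin r → ℝ)) (u v : Fin r → ℝ) (ω : Ω) :
    cpmS X (u + v) ω = cpmS X u ω + cpmS X v ω := by
  simp [cpmS, add_mul, Finset.sum_add_distrib]

lemma cpmS_sub (X : Ω → (Fin r → ℝ)) (u v : Fin r → ℝ) (ω : Ω) :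
    cpmS X (u - v) ω = cpmS X u ω - cpmS X v ω := by
  simp [cpmS, sub_mul, Finset.sum_sub_distrib]

lemma cpmS_measurable (X : Ω → (Fin r → ℝ)) (hXm : Measurable X) (u : Fin r → ℝ) :
    Measurable (cpmS X u) := by
  apply Finset.measurable_sum
  intro i _
  exact ((measurable_pi_apply i).comp hXm).const_mul (u i)

variable (μ : Measure Ω) [IsProbabilityMeasure μ] (X : Ω → (Fin r → ℝ))

lemma cpm_int_pow (hXm : Measurable X)
    (hX : ∀ u : Fin r → ℝ, Measure.map (cpmS X u) μ
      = ProbabilityTheory.gaussianReal 0 (Real.toNNReal (cpmQ P u u)))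
    (u : Fin r → ℝ) (n : ℕ) :
    MeasureTheory.Integrable (fun ω => (cpmS X u ω) ^ n) μ := by
  have h := cpm_gaussianReal_integrable_pow (Real.toNNReal (cpmQ P u u)) n
  rw [← hX u] at h
  exact (MeasureTheory.integrable_map_measure (measurable_id.pow_const n).aestronglyMeasurable
    (cpmS_measurable X hXm u).aemeasurable).mp h

lemma cpm_mom (hXm : Measurable X)
    (hX : ∀ u : Fin r → ℝ, Measure.map (cpmS X u) μ
      = ProbabilityTheory.gaussianReal 0 (Real.toNNReal (cpmQ P u u)))
    (u : Fin r → ℝ) (n : ℕ) :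
    ∫ ω, (cpmS X u ω) ^ n ∂μ
      = ∫ x : ℝ, x ^ n ∂(ProbabilityTheory.gaussianReal 0 (Real.toNNReal (cpmQ P u u))) := by
  rw [← hX u]
  exact (MeasureTheory.integral_map (cpmS_measurable X hXm u).aemeasurable
    (measurable_id.pow_const n).aestronglyMeasurable).symm

lemma cpm_msq (hP : P.PosSemidef) (hXm : Measurable X)
    (hX : ∀ u : Fin r → ℝ, Measure.map (cpmS X u) μ
      = ProbabilityTheory.gaussianReal 0 (Real.toNNReal (cpmQ P u u)))
    (u : Fin r → ℝ) :
    ∫ ω, (cpmS X u ω) ^ 2 ∂μ = cpmQ P u u := by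
  rw [cpm_mom μ X hXm hX u 2, cpm_gaussian_sq]
  exact Real.coe_toNNReal _ (cpmQ_nonneg hP u)

lemma cpm_m4 (hP : P.PosSemidef) (hXm : Measurable X)
    (hX : ∀ u : Fin r → ℝ, Measure.map (cpmS X u) μ
      = ProbabilityTheory.gaussianReal 0 (Real.toNNReal (cpmQ P u u)))
    (u : Fin r → ℝ) :
    ∫ ω, (cpmS X u ω) ^ 4 ∂μ = 3 * (cpmQ P u u) ^ 2 := by
  rw [cpm_mom μ X hXm hX u 4, cpm_gaussian_pow4, Real.coe_toNNReal _ (cpmQ_nonneg hP u)]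

lemma cpm_int_two (hXm : Measurable X)
    (hX : ∀ u : Fin r → ℝ, Measure.map (cpmS X u) μ
      = ProbabilityTheory.gaussianReal 0 (Real.toNNReal (cpmQ P u u)))
    (u w : Fin r → ℝ) :
    MeasureTheory.Integrable (fun ω => cpmS X u ω * cpmS X w ω) μ := by
  have h : MeasureTheory.Integrable
      (fun ω => ((cpmS X (u + w) ω) ^ 2 - (cpmS X (u - w) ω) ^ 2) / 4) μ := by
    exact ((cpm_int_pow μ X hXm hX (u + w) 2).sub (cpm_int_pow μ X hXm hX (u - w) 2)).div_const 4
  refine h.congr (MeasureTheory.ae_of_all _ fun ω => ?_)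
  dsimp only
  rw [cpmS_add X u w ω, cpmS_sub X u w ω]
  ring

lemma cpm_m2 (hP : P.PosSemidef) (hXm : Measurable X)
    (hX : ∀ u : Fin r → ℝ, Measure.map (cpmS X u) μ
      = ProbabilityTheory.gaussianReal 0 (Real.toNNReal (cpmQ P u u)))
    (u w : Fin r → ℝ) :
    ∫ ω, cpmS X u ω * cpmS X w ω ∂μ = cpmQ P u w := by
  have key : (fun ω => cpmS X u ω * cpmS X w ω)
      = fun ω => ((cpmS X (u + w) ω) ^ 2 - (cpmS X (u - w) ω) ^ 2) / 4 := by
    funext ω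
    rw [cpmS_add X u w ω, cpmS_sub X u w ω]
    ring
  rw [key, MeasureTheory.integral_div, MeasureTheory.integral_sub
    (cpm_int_pow μ X hXm hX (u + w) 2) (cpm_int_pow μ X hXm hX (u - w) 2),
    cpm_msq μ X hP hXm hX (u + w), cpm_msq μ X hP hXm hX (u - w),
    cpmQ_expand_add hP u w, cpmQ_expand_sub hP u w]
  ring

lemma cpm_int_sq_mul (hXm : Measurable X)
    (hX : ∀ u : Fin r → ℝ, Measure.map (cpmS X u) μ
      = ProbabilityTheory.gaussianReal 0 (Real.toNNReal (cpmQ P u u)))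
    (u w : Fin r → ℝ) :
    MeasureTheory.Integrable (fun ω => (cpmS X u ω) ^ 2 * (cpmS X w ω) ^ 2) μ := by
  have h : MeasureTheory.Integrable (fun ω =>
      ((cpmS X (u + w) ω) ^ 4 + (cpmS X (u - w) ω) ^ 4
        - 2 * (cpmS X u ω) ^ 4 - 2 * (cpmS X w ω) ^ 4) / 12) μ := by
    exact ((((cpm_int_pow μ X hXm hX (u + w) 4).add (cpm_int_pow μ X hXm hX (u - w) 4)).sub
      ((cpm_int_pow μ X hXm hX u 4).const_mul 2)).sub
      ((cpm_int_pow μ X hXm hX w 4).const_mul 2)).div_const 12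
  refine h.congr (MeasureTheory.ae_of_all _ fun ω => ?_)
  dsimp only
  rw [cpmS_add X u w ω, cpmS_sub X u w ω]
  ring

lemma cpm_m22 (hP : P.PosSemidef) (hXm : Measurable X)
    (hX : ∀ u : Fin r → ℝ, Measure.map (cpmS X u) μ
      = ProbabilityTheory.gaussianReal 0 (Real.toNNReal (cpmQ P u u)))
    (u w : Fin r → ℝ) :
    ∫ ω, (cpmS X u ω) ^ 2 * (cpmS X w ω) ^ 2 ∂μ
      = cpmQ P u u * cpmQ P w w + 2 * (cpmQ P u w) ^ 2 := by
  have I1 : MeasureTheory.Integrable (fun ω => (cpmS X (u + w) ω) ^ 4) μ :=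
    cpm_int_pow μ X hXm hX (u + w) 4
  have I2 : MeasureTheory.Integrable (fun ω => (cpmS X (u - w) ω) ^ 4) μ :=
    cpm_int_pow μ X hXm hX (u - w) 4
  have I3 : MeasureTheory.Integrable (fun ω => 2 * (cpmS X u ω) ^ 4) μ :=
    (cpm_int_pow μ X hXm hX u 4).const_mul 2
  have I4 : MeasureTheory.Integrable (fun ω => 2 * (cpmS X w ω) ^ 4) μ :=
    (cpm_int_pow μ X hXm hX w 4).const_mul 2
  have I12 : MeasureTheory.Integrable
      (fun ω => (cpmS X (u + w) ω) ^ 4 + (cpmS X (u - w) ω) ^ 4) μ := I1.add I2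
  have I123 : MeasureTheory.Integrable
      (fun ω => (cpmS X (u + w) ω) ^ 4 + (cpmS X (u - w) ω) ^ 4 - 2 * (cpmS X u ω) ^ 4) μ :=
    I12.sub I3
  have key : (fun ω => (cpmS X u ω) ^ 2 * (cpmS X w ω) ^ 2) = fun ω =>
      ((cpmS X (u + w) ω) ^ 4 + (cpmS X (u - w) ω) ^ 4
        - 2 * (cpmS X u ω) ^ 4 - 2 * (cpmS X w ω) ^ 4) / 12 := by
    funext ω
    rw [cpmS_add X u w ω, cpmS_sub X u w ω]
    ring
  rw [key, MeasureTheory.integral_div, MeasureTheory.integral_sub I123 I4,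
    MeasureTheory.integral_sub I12 I3, MeasureTheory.integral_add I1 I2,
    MeasureTheory.integral_const_mul, MeasureTheory.integral_const_mul,
    cpm_m4 μ X hP hXm hX (u + w), cpm_m4 μ X hP hXm hX (u - w),
    cpm_m4 μ X hP hXm hX u, cpm_m4 μ X hP hXm hX w,
    cpmQ_expand_add hP u w, cpmQ_expand_sub hP u w]
  ring

lemma cpm_int_four (hXm : Measurable X)
    (hX : ∀ u : Fin r → ℝ, Measure.map (cpmS X u) μ
      = ProbabilityTheory.gaussianReal 0 (Real.toNNReal (cpmQ P u u)))
    (u v w z : Fin r → ℝ) :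
    MeasureTheory.Integrable
      (fun ω => cpmS X u ω * cpmS X v ω * cpmS X w ω * cpmS X z ω) μ := by
  have h : MeasureTheory.Integrable (fun ω =>
      ((cpmS X (u + v) ω) ^ 2 * (cpmS X (w + z) ω) ^ 2
        - (cpmS X (u + v) ω) ^ 2 * (cpmS X (w - z) ω) ^ 2
        - (cpmS X (u - v) ω) ^ 2 * (cpmS X (w + z) ω) ^ 2
        + (cpmS X (u - v) ω) ^ 2 * (cpmS X (w - z) ω) ^ 2) / 16) μ := by
    exact ((((cpm_int_sq_mul μ X hXm hX (u + v) (w + z)).sub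
      (cpm_int_sq_mul μ X hXm hX (u + v) (w - z))).sub
      (cpm_int_sq_mul μ X hXm hX (u - v) (w + z))).add
      (cpm_int_sq_mul μ X hXm hX (u - v) (w - z))).div_const 16
  refine h.congr (MeasureTheory.ae_of_all _ fun ω => ?_)
  dsimp only
  rw [cpmS_add X u v ω, cpmS_add X w z ω, cpmS_sub X u v ω, cpmS_sub X w z ω]
  ring

lemma cpm_m4gen (hP : P.PosSemidef) (hXm : Measurable X)
    (hX : ∀ u : Fin r → ℝ, Measure.map (cpmS X u) μ
      = ProbabilityTheory.gaussianReal 0 (Real.toNNReal (cpmQ P u u)))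
    (u v w z : Fin r → ℝ) :
    ∫ ω, cpmS X u ω * cpmS X v ω * cpmS X w ω * cpmS X z ω ∂μ
      = cpmQ P u v * cpmQ P w z + cpmQ P u w * cpmQ P v z + cpmQ P u z * cpmQ P v w := by
  have J1 : MeasureTheory.Integrable
      (fun ω => (cpmS X (u + v) ω) ^ 2 * (cpmS X (w + z) ω) ^ 2) μ :=
    cpm_int_sq_mul μ X hXm hX (u + v) (w + z)
  have J2 : MeasureTheory.Integrable
      (fun ω => (cpmS X (u + v) ω) ^ 2 * (cpmS X (w - z) ω) ^ 2) μ :=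
    cpm_int_sq_mul μ X hXm hX (u + v) (w - z)
  have J3 : MeasureTheory.Integrable
      (fun ω => (cpmS X (u - v) ω) ^ 2 * (cpmS X (w + z) ω) ^ 2) μ :=
    cpm_int_sq_mul μ X hXm hX (u - v) (w + z)
  have J4 : MeasureTheory.Integrable
      (fun ω => (cpmS X (u - v) ω) ^ 2 * (cpmS X (w - z) ω) ^ 2) μ :=
    cpm_int_sq_mul μ X hXm hX (u - v) (w - z)
  have J12 : MeasureTheory.Integrable
      (fun ω => (cpmS X (u + v) ω) ^ 2 * (cpmS X (w + z) ω) ^ 2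
        - (cpmS X (u + v) ω) ^ 2 * (cpmS X (w - z) ω) ^ 2) μ := J1.sub J2
  have J123 : MeasureTheory.Integrable
      (fun ω => (cpmS X (u + v) ω) ^ 2 * (cpmS X (w + z) ω) ^ 2
        - (cpmS X (u + v) ω) ^ 2 * (cpmS X (w - z) ω) ^ 2
        - (cpmS X (u - v) ω) ^ 2 * (cpmS X (w + z) ω) ^ 2) μ := J12.sub J3
  have key : (fun ω => cpmS X u ω * cpmS X v ω * cpmS X w ω * cpmS X z ω) = fun ω =>
      ((cpmS X (u + v) ω) ^ 2 * (cpmS X (w + z) ω) ^ 2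
        - (cpmS X (u + v) ω) ^ 2 * (cpmS X (w - z) ω) ^ 2
        - (cpmS X (u - v) ω) ^ 2 * (cpmS X (w + z) ω) ^ 2
        + (cpmS X (u - v) ω) ^ 2 * (cpmS X (w - z) ω) ^ 2) / 16 := by
    funext ω
    rw [cpmS_add X u v ω, cpmS_add X w z ω, cpmS_sub X u v ω, cpmS_sub X w z ω]
    ring
  rw [key, MeasureTheory.integral_div, MeasureTheory.integral_add J123 J4,
    MeasureTheory.integral_sub J12 J3, MeasureTheory.integral_sub J1 J2,
    cpm_m22 μ X hP hXm hX (u + v) (w + z), cpm_m22 μ X hP hXm hX (u + v) (w - z),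
    cpm_m22 μ X hP hXm hX (u - v) (w + z), cpm_m22 μ X hP hXm hX (u - v) (w - z),
    cpmQ_expand_add hP u v, cpmQ_expand_add hP w z, cpmQ_expand_sub hP u v,
    cpmQ_expand_sub hP w z, cpmQ_mix_pp u v w z, cpmQ_mix_pm u v w z,
    cpmQ_mix_mp u v w z, cpmQ_mix_mm u v w z]
  ring

lemma cpm_single_S (i : Fin r) (ω : Ω) : cpmS X (Pi.single i (1 : ℝ)) ω = X ω i := by
  simp [cpmS, Pi.single_apply]

lemma cpm_single_Q (i k : Fin r) : cpmQ P (Pi.single i (1 : ℝ)) (Pi.single k 1) = P i k := by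
  simp [cpmQ, Pi.single_apply]

lemma cpm_cov_integrable (hP : P.PosSemidef) (hXm : Measurable X)
    (hX : ∀ u : Fin r → ℝ, Measure.map (cpmS X u) μ
      = ProbabilityTheory.gaussianReal 0 (Real.toNNReal (cpmQ P u u)))
    (i k l m : Fin r) :
    MeasureTheory.Integrable
      (fun ω => (X ω i * X ω k - P i k) * (X ω l * X ω m - P l m)) μ := by
  have i4 := cpm_int_four μ X hXm hX (Pi.single i 1) (Pi.single k 1) (Pi.single l 1)
    (Pi.single m 1)
  simp only [cpm_single_S] at i4
  have i2a := cpm_int_two μ X hXm hX (Pi.single l 1) (Pi.single m 1)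
  simp only [cpm_single_S] at i2a
  have i2b := cpm_int_two μ X hXm hX (Pi.single i 1) (Pi.single k 1)
  simp only [cpm_single_S] at i2b
  have h : MeasureTheory.Integrable (fun ω =>
      X ω i * X ω k * X ω l * X ω m - P i k * (X ω l * X ω m)
        - P l m * (X ω i * X ω k) + P i k * P l m) μ := by
    exact ((i4.sub (i2a.const_mul (P i k))).sub (i2b.const_mul (P l m))).add
      (MeasureTheory.integrable_const (P i k * P l m))
  refine h.congr (MeasureTheory.ae_of_all _ fun ω => ?_)
  dsimp only
  ring

lemma cpm_cov_integral (hP : P.PosSemidef) (hXm : Measurable X)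
    (hX : ∀ u : Fin r → ℝ, Measure.map (cpmS X u) μ
      = ProbabilityTheory.gaussianReal 0 (Real.toNNReal (cpmQ P u u)))
    (i k l m : Fin r) :
    ∫ ω, (X ω i * X ω k - P i k) * (X ω l * X ω m - P l m) ∂μ
      = P i l * P k m + P i m * P k l := by
  have i4 := cpm_int_four μ X hXm hX (Pi.single i 1) (Pi.single k 1) (Pi.single l 1)
    (Pi.single m 1)
  simp only [cpm_single_S] at i4
  have i2a := cpm_int_two μ X hXm hX (Pi.single l 1) (Pi.single m 1)
  simp only [cpm_single_S] at i2a
  have i2b := cpm_int_two μ X hXm hX (Pi.single i 1) (Pi.single k 1)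
  simp only [cpm_single_S] at i2b
  have e4 := cpm_m4gen μ X hP hXm hX (Pi.single i 1) (Pi.single k 1) (Pi.single l 1)
    (Pi.single m 1)
  simp only [cpm_single_S, cpm_single_Q] at e4
  have e2a := cpm_m2 μ X hP hXm hX (Pi.single l 1) (Pi.single m 1)
  simp only [cpm_single_S, cpm_single_Q] at e2a
  have e2b := cpm_m2 μ X hP hXm hX (Pi.single i 1) (Pi.single k 1)
  simp only [cpm_single_S, cpm_single_Q] at e2b
  have K2a : MeasureTheory.Integrable (fun ω => P i k * (X ω l * X ω m)) μ :=
    i2a.const_mul (P i k)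
  have K2b : MeasureTheory.Integrable (fun ω => P l m * (X ω i * X ω k)) μ :=
    i2b.const_mul (P l m)
  have K12 : MeasureTheory.Integrable
      (fun ω => X ω i * X ω k * X ω l * X ω m - P i k * (X ω l * X ω m)) μ := i4.sub K2a
  have K123 : MeasureTheory.Integrable
      (fun ω => X ω i * X ω k * X ω l * X ω m - P i k * (X ω l * X ω m)
        - P l m * (X ω i * X ω k)) μ := K12.sub K2b
  have key : (fun ω => (X ω i * X ω k - P i k) * (X ω l * X ω m - P l m)) = fun ω =>
      X ω i * X ω k * X ω l * X ω m - P i k * (X ω l * X ω m)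
        - P l m * (X ω i * X ω k) + P i k * P l m := by
    funext ω
    ring
  rw [key,
    MeasureTheory.integral_add K123 (MeasureTheory.integrable_const (P i k * P l m)),
    MeasureTheory.integral_sub K12 K2b, MeasureTheory.integral_sub i4 K2a,
    MeasureTheory.integral_const_mul, MeasureTheory.integral_const_mul,
    MeasureTheory.integral_const, e4, e2a, e2b]
  simp [measure_univ]
  ring

end VectorMoments

theorem crossing_pair_partition_moment {r : ℕ} {Ω : Type*} [MeasurableSpace Ω]
    (μ : Measure Ω) [IsProbabilityMeasure μ]
    (X₁ X₂ : Ω → (Fin r → ℝ)) (hX₁m : Measurable X₁) (hX₂m : Measurable X₂)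
    (hindep : IndepFun X₁ X₂ μ)
    (P : Matrix (Fin r) (Fin r) ℝ) (hP : P.PosSemidef)
    (hX₁ : ∀ u : Fin r → ℝ,
      Measure.map (fun ω => ∑ i, u i * X₁ ω i) μ =
        gaussianReal 0 (Real.toNNReal (∑ i, ∑ j, u i * P i j * u j)))
    (hX₂ : ∀ u : Fin r → ℝ,
      Measure.map (fun ω => ∑ i, u i * X₂ ω i) μ =
        gaussianReal 0 (Real.toNNReal (∑ i, ∑ j, u i * P i j * u j))) :
    (Matrix.of fun i j =>
        ∫ ω, ((vecMulVec (X₁ ω) (X₁ ω) - P) * (vecMulVec (X₂ ω) (X₂ ω) - P) *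
            (vecMulVec (X₁ ω) (X₁ ω) - P) * (vecMulVec (X₂ ω) (X₂ ω) - P)) i j ∂μ) =
      (3 : ℝ) • P ^ 4 + (P ^ 2).trace • P ^ 2 := by
  have hXc₁ : ∀ u : Fin r → ℝ, Measure.map (cpmS X₁ u) μ
      = gaussianReal 0 (Real.toNNReal (cpmQ P u u)) := hX₁
  have hXc₂ : ∀ u : Fin r → ℝ, Measure.map (cpmS X₂ u) μ
      = gaussianReal 0 (Real.toNNReal (cpmQ P u u)) := hX₂
  have h1int := fun i k l m => cpm_cov_integrable μ X₁ hP hX₁m hXc₁ i k l m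
  have h1val := fun i k l m => cpm_cov_integral μ X₁ hP hX₁m hXc₁ i k l m
  have h2int := fun i k l m => cpm_cov_integrable μ X₂ hP hX₂m hXc₂ i k l m
  have h2val := fun i k l m => cpm_cov_integral μ X₂ hP hX₂m hXc₂ i k l m
  have hmeasf : ∀ a b c d : Fin r, Measurable
      (fun x : Fin r → ℝ => (x a * x b - P a b) * (x c * x d - P c d)) := fun a b c d =>
    (((measurable_pi_apply a).mul (measurable_pi_apply b)).sub measurable_const).mul
      (((measurable_pi_apply c).mul (measurable_pi_apply d)).sub measurable_const)
  -- entrywise matrix facts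
  have pw2 : ∀ a b : Fin r, (P ^ 2) a b = ∑ k, P a k * P k b := by
    intro a b
    rw [pow_two, Matrix.mul_apply]
  have p4 : ∀ a b : Fin r, (P ^ 4) a b = ∑ m, ∑ l, ∑ k, P a k * P k l * P l m * P m b := by
    intro a b
    rw [show (P ^ 4) = ((P * P) * P) * P by rw [pow_succ, pow_succ, pow_two]]
    simp only [Matrix.mul_apply, Finset.sum_mul]
  have conv3 : ∀ g : Fin r → Fin r → Fin r → ℝ,
      (∑ m, ∑ l, ∑ k, g m l k) = ∑ t : Fin r × Fin r × Fin r, g t.1 t.2.1 t.2.2 := by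
    intro g
    rw [Fintype.sum_prod_type]
    exact Finset.sum_congr rfl fun m _ => by rw [Fintype.sum_prod_type]
  ext i j
  simp only [Matrix.of_apply]
  -- pointwise expansion of the matrix product entry
  have hexp : ∀ ω : Ω, ((vecMulVec (X₁ ω) (X₁ ω) - P) * (vecMulVec (X₂ ω) (X₂ ω) - P) *
      (vecMulVec (X₁ ω) (X₁ ω) - P) * (vecMulVec (X₂ ω) (X₂ ω) - P)) i j
      = ∑ m, ∑ l, ∑ k, ((X₁ ω i * X₁ ω k - P i k) * (X₁ ω l * X₁ ω m - P l m)) *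
          ((X₂ ω k * X₂ ω l - P k l) * (X₂ ω m * X₂ ω j - P m j)) := by
    intro ω
    simp only [Matrix.mul_apply, Matrix.sub_apply, Matrix.vecMulVec_apply, Finset.sum_mul]
    exact Finset.sum_congr rfl fun m _ => Finset.sum_congr rfl fun l _ =>
      Finset.sum_congr rfl fun k _ => by ring
  have hint : ∀ k l m : Fin r, MeasureTheory.Integrable (fun ω =>
      ((X₁ ω i * X₁ ω k - P i k) * (X₁ ω l * X₁ ω m - P l m)) *
      ((X₂ ω k * X₂ ω l - P k l) * (X₂ ω m * X₂ ω j - P m j))) μ := by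
    intro k l m
    have hind : IndepFun (fun ω => (X₁ ω i * X₁ ω k - P i k) * (X₁ ω l * X₁ ω m - P l m))
        (fun ω => (X₂ ω k * X₂ ω l - P k l) * (X₂ ω m * X₂ ω j - P m j)) μ :=
      hindep.comp (hmeasf i k l m) (hmeasf k l m j)
    exact hind.integrable_mul (h1int i k l m) (h2int k l m j)
  have hval : ∀ k l m : Fin r, (∫ ω,
      ((X₁ ω i * X₁ ω k - P i k) * (X₁ ω l * X₁ ω m - P l m)) *
      ((X₂ ω k * X₂ ω l - P k l) * (X₂ ω m * X₂ ω j - P m j)) ∂μ)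
      = (P i l * P k m + P i m * P k l) * (P k m * P l j + P k j * P l m) := by
    intro k l m
    have hind : IndepFun (fun ω => (X₁ ω i * X₁ ω k - P i k) * (X₁ ω l * X₁ ω m - P l m))
        (fun ω => (X₂ ω k * X₂ ω l - P k l) * (X₂ ω m * X₂ ω j - P m j)) μ :=
      hindep.comp (hmeasf i k l m) (hmeasf k l m j)
    have hh := hind.integral_fun_mul_eq_mul_integral (h1int i k l m).1 (h2int k l m j).1
    rw [hh, h1val i k l m, h2val k l m j]
  have hsum : (∫ ω, ((vecMulVec (X₁ ω) (X₁ ω) - P) * (vecMulVec (X₂ ω) (X₂ ω) - P) *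
      (vecMulVec (X₁ ω) (X₁ ω) - P) * (vecMulVec (X₂ ω) (X₂ ω) - P)) i j ∂μ)
      = ∑ m, ∑ l, ∑ k, (P i l * P k m + P i m * P k l) * (P k m * P l j + P k j * P l m) := by
    rw [MeasureTheory.integral_congr_ae (MeasureTheory.ae_of_all _ hexp)]
    rw [MeasureTheory.integral_finset_sum _ (fun m _ => MeasureTheory.integrable_finset_sum _
      (fun l _ => MeasureTheory.integrable_finset_sum _ (fun k _ => hint k l m)))]
    refine Finset.sum_congr rfl fun m _ => ?_
    rw [MeasureTheory.integral_finset_sum _ (fun l _ => MeasureTheory.integrable_finset_sum _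
      (fun k _ => hint k l m))]
    refine Finset.sum_congr rfl fun l _ => ?_
    rw [MeasureTheory.integral_finset_sum _ (fun k _ => hint k l m)]
    exact Finset.sum_congr rfl fun k _ => hval k l m
  rw [hsum]
  -- the three P^4 representations
  have Ea2 : (∑ m, ∑ l, ∑ k, P i l * P l m * P m k * P k j) = (P ^ 4) i j := by
    rw [p4 i j, conv3, conv3]
    exact Fintype.sum_equiv
      ⟨fun t => (t.2.2, t.1, t.2.1), fun t => (t.2.1, t.2.2, t.1),
        by rintro ⟨a, b, c⟩; rfl, by rintro ⟨a, b, c⟩; rfl⟩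
      _ _ (by rintro ⟨m, l, k⟩; rfl)
  have Ea3 : (∑ m, ∑ l, ∑ k, P i m * P m k * P k l * P l j) = (P ^ 4) i j := by
    rw [p4 i j, conv3, conv3]
    exact Fintype.sum_equiv
      ⟨fun t => (t.2.1, t.2.2, t.1), fun t => (t.2.2, t.1, t.2.1),
        by rintro ⟨a, b, c⟩; rfl, by rintro ⟨a, b, c⟩; rfl⟩
      _ _ (by rintro ⟨m, l, k⟩; rfl)
  have Ea4 : (∑ m, ∑ l, ∑ k, P i m * P m l * P l k * P k j) = (P ^ 4) i j := by
    rw [p4 i j, conv3, conv3]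
    exact Fintype.sum_equiv
      ⟨fun t => (t.2.2, t.2.1, t.1), fun t => (t.2.2, t.2.1, t.1),
        by rintro ⟨a, b, c⟩; rfl, by rintro ⟨a, b, c⟩; rfl⟩
      _ _ (by rintro ⟨m, l, k⟩; rfl)
  -- the trace term
  have htr : (P ^ 2).trace = ∑ m, ∑ k, P k m * P m k := by
    have h1 : (P ^ 2).trace = ∑ k, ∑ m, P k m * P m k := by
      rw [Matrix.trace]
      exact Finset.sum_congr rfl fun k _ => by rw [Matrix.diag_apply, pw2 k k]
    rw [h1, Finset.sum_comm]
  have Et : (∑ m, ∑ l, ∑ k, P i l * P l j * (P k m * P m k)) = (P ^ 2).trace * (P ^ 2) i j := by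
    have h1 : ∀ m : Fin r, (∑ l, ∑ k, P i l * P l j * (P k m * P m k))
        = (P ^ 2) i j * ∑ k, P k m * P m k := by
      intro m
      rw [pw2 i j, Finset.sum_mul]
      refine Finset.sum_congr rfl fun l _ => ?_
      rw [Finset.mul_sum]
    calc (∑ m, ∑ l, ∑ k, P i l * P l j * (P k m * P m k))
        = ∑ m, (P ^ 2) i j * ∑ k, P k m * P m k := Finset.sum_congr rfl fun m _ => h1 m
      _ = (P ^ 2) i j * ∑ m, ∑ k, P k m * P m k := by rw [Finset.mul_sum]
      _ = (P ^ 2).trace * (P ^ 2) i j := by rw [← htr]; ring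
  -- pointwise algebraic identity
  have hpt : ∀ m l k : Fin r, (P i l * P k m + P i m * P k l) * (P k m * P l j + P k j * P l m)
      = P i l * P l j * (P k m * P m k) + P i l * P l m * P m k * P k j
        + P i m * P m k * P k l * P l j + P i m * P m l * P l k * P k j := by
    intro m l k
    rw [cpmPsym hP m k, cpmPsym hP m l, cpmPsym hP l k]
    ring
  have hrhs : ((3 : ℝ) • P ^ 4 + (P ^ 2).trace • P ^ 2) i j
      = 3 * (P ^ 4) i j + (P ^ 2).trace * (P ^ 2) i j := by
    simp [Matrix.add_apply, Matrix.smul_apply, smul_eq_mul]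
  rw [hrhs]
  calc (∑ m, ∑ l, ∑ k, (P i l * P k m + P i m * P k l) * (P k m * P l j + P k j * P l m))
      = ∑ m, ∑ l, ∑ k, (P i l * P l j * (P k m * P m k) + P i l * P l m * P m k * P k j
          + P i m * P m k * P k l * P l j + P i m * P m l * P l k * P k j) :=
        Finset.sum_congr rfl fun m _ => Finset.sum_congr rfl fun l _ =>
          Finset.sum_congr rfl fun k _ => hpt m l k
    _ = (∑ m, ∑ l, ∑ k, P i l * P l j * (P k m * P m k))
        + (∑ m, ∑ l, ∑ k, P i l * P l m * P m k * P k j)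
        + (∑ m, ∑ l, ∑ k, P i m * P m k * P k l * P l j)
        + (∑ m, ∑ l, ∑ k, P i m * P m l * P l k * P k j) := by
          simp only [Finset.sum_add_distrib]
    _ = 3 * (P ^ 4) i j + (P ^ 2).trace * (P ^ 2) i j := by
          rw [Et, Ea2, Ea3, Ea4]; ring
end
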